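/- Let X and Y be smooth normed spaces over 𝔽 with unique compatible semi-inner products, and let f : X → Y satisfy |[f(x), f(y)]| = |[x, y]| for all x, y ∈ X. If x, y, z ∈ X are pairwise Birkhoff–James orthogonal unit vectors, then f(x), f(y), f(z) are linearly independent. -/

import Mathlib

open RCLike

/-- A support functional at `x`: a norm-one continuous linear functional with `φ x = ‖x‖`. -/
def SuppFunc (𝕜 : Type*) [RCLike 𝕜] {X : Type*} [NormedAddCommGroup X] [NormedSpace 𝕜 X]
    (x : X) (φ : X →L[𝕜] 𝕜) : Prop :=
  ‖φ‖ = 1 ∧ φ x = (‖x‖ : 𝕜)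

/-- `X` is smooth at `x` if there is a unique support functional at `x`. -/
def NormSmoothAt (𝕜 : Type*) [RCLike 𝕜] {X : Type*} [NormedAddCommGroup X] [NormedSpace 𝕜 X]
    (x : X) : Prop := ∃! φ : X →L[𝕜] 𝕜, SuppFunc 𝕜 x φ

/-- `X` is smooth if it is smooth at every nonzero point. -/
def NormSmooth (𝕜 : Type*) (X : Type*) [RCLike 𝕜] [NormedAddCommGroup X] [NormedSpace 𝕜 X] :
    Prop := ∀ x : X, x ≠ 0 → NormSmoothAt 𝕜 x

/-- `sip` is the canonical semi-inner product `[u,v] = ‖v‖ * φ_v u` built from support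
functionals (on a smooth space this pins `sip` down uniquely). -/
def IsCompatSIP (𝕜 : Type*) {X : Type*} [RCLike 𝕜] [NormedAddCommGroup X] [NormedSpace 𝕜 X]
    (sip : X → X → 𝕜) : Prop :=
  (∀ u : X, sip u 0 = 0) ∧
  ∀ (u v : X) (φ : X →L[𝕜] 𝕜), SuppFunc 𝕜 v φ → sip u v = (‖v‖ : 𝕜) * φ u

/-- Birkhoff–James orthogonality: `x ⊥ y` iff `‖x + a • y‖ ≥ ‖x‖` for all scalars. -/
def BJOrth (𝕜 : Type*) {X : Type*} [RCLike 𝕜] [NormedAddCommGroup X] [NormedSpace 𝕜 X]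
    (x y : X) : Prop := ∀ a : 𝕜, ‖x‖ ≤ ‖x + a • y‖

/-- A semi-inner product compatible with the norm: additive and homogeneous in the first
variable, conjugate-homogeneous in the second, positive definite, Cauchy–Schwarz, and
`[x,x] = ‖x‖²`. -/
def IsSIP (𝕜 : Type*) {X : Type*} [RCLike 𝕜] [NormedAddCommGroup X] [NormedSpace 𝕜 X]
    (sip : X → X → 𝕜) : Prop :=
  (∀ x y z : X, sip (x + y) z = sip x z + sip y z) ∧
  (∀ (a : 𝕜) (x y : X), sip (a • x) y = a * sip x y) ∧
  (∀ (a : 𝕜) (x y : X), sip x (a • y) = (starRingEnd 𝕜) a * sip x y) ∧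
  (∀ x : X, x ≠ 0 → 0 < re (sip x x) ∧ im (sip x x) = 0) ∧
  (∀ x y : X, ‖sip x y‖ ≤ Real.sqrt (re (sip x x)) * Real.sqrt (re (sip y y))) ∧
  (∀ x : X, sip x x = (‖x‖ : 𝕜) ^ 2)

open Submodule in
/-- From BJ orthogonality `x ⊥ y`, `‖x‖ = 1`, produce a support functional at `x`
vanishing at `y`. -/
lemma bj_supp {𝕜 : Type*} [RCLike 𝕜] {X : Type*} [NormedAddCommGroup X] [NormedSpace 𝕜 X]
    {x y : X} (hx : ‖x‖ = 1) (h : BJOrth 𝕜 x y) :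
    ∃ φ : X →L[𝕜] 𝕜, SuppFunc 𝕜 x φ ∧ φ y = 0 := by
  set S : Submodule 𝕜 X := (span 𝕜 {y}).topologicalClosure with hS
  haveI hSc : IsClosed (S : Set X) := (span 𝕜 {y}).isClosed_topologicalClosure
  have hle : ∀ s ∈ S, ‖x‖ ≤ ‖x + s‖ := by
    intro s hs
    have hsub : (S : Set X) ⊆ {w : X | ‖x‖ ≤ ‖x + w‖} := by
      rw [hS, Submodule.topologicalClosure_coe]
      apply closure_minimal
      · intro w hw
        rcases mem_span_singleton.1 hw with ⟨a, rfl⟩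
        exact h a
      · exact isClosed_le continuous_const ((continuous_const.add continuous_id).norm)
    exact hsub hs
  let π : X →L[𝕜] X ⧸ S :=
    S.mkQ.mkContinuous 1 (fun m => by simpa using Submodule.Quotient.norm_mk_le S m)
  have hπ : ∀ m : X, π m = Submodule.Quotient.mk m := fun m => rfl
  have hπnorm : ‖π‖ ≤ 1 := S.mkQ.mkContinuous_norm_le zero_le_one _
  have hnorm : ‖π x‖ = ‖x‖ := by
    refine le_antisymm (by rw [hπ]; exact Submodule.Quotient.norm_mk_le S x) ?_
    refine le_of_forall_pos_le_add (fun ε hε => ?_)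
    obtain ⟨m, hm, hlt⟩ := Submodule.Quotient.norm_mk_lt (π x) hε
    have hmem : m - x ∈ S := by
      rw [← Submodule.Quotient.eq]; rw [hπ] at hm; exact hm
    calc ‖x‖ ≤ ‖x + (m - x)‖ := hle _ hmem
      _ = ‖m‖ := by rw [add_sub_cancel]
      _ ≤ ‖π x‖ + ε := hlt.le
  have hne : π x ≠ 0 := by
    intro h0
    rw [h0, norm_zero] at hnorm
    rw [← hnorm] at hx; norm_num at hx
  obtain ⟨g, hg1, hg2⟩ := exists_dual_vector 𝕜 (π x) (norm_ne_zero_iff.2 hne)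
  refine ⟨g.comp π, ⟨?_, ?_⟩, ?_⟩
  · refine le_antisymm ?_ ?_
    · calc ‖g.comp π‖ ≤ ‖g‖ * ‖π‖ := g.opNorm_comp_le π
        _ ≤ 1 * 1 := by rw [hg1]; exact mul_le_mul_of_nonneg_left hπnorm zero_le_one
        _ = 1 := one_mul 1
    · have h1 : ‖(g.comp π) x‖ ≤ ‖g.comp π‖ * ‖x‖ := (g.comp π).le_opNorm x
      have h2 : ‖(g.comp π) x‖ = 1 := by
        show ‖g (π x)‖ = 1
        rw [hg2, hnorm, hx]; simp
      rw [h2, hx, mul_one] at h1; exact h1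
  · show g (π x) = _
    rw [hg2, hnorm]
  · show g (π y) = 0
    have : π y = 0 := by
      rw [hπ, Submodule.Quotient.mk_eq_zero]
      exact Submodule.le_topologicalClosure _ (subset_span rfl)
    rw [this, map_zero]

/-- BJ orthogonality kills the compatible SIP: `[y, x] = 0` when `x ⊥ y` and `‖x‖ = 1`. -/
lemma bj_sip_zero {𝕜 : Type*} [RCLike 𝕜] {X : Type*} [NormedAddCommGroup X] [NormedSpace 𝕜 X]
    {sipX : X → X → 𝕜} (hX : IsCompatSIP 𝕜 sipX) {x y : X} (hx : ‖x‖ = 1)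
    (h : BJOrth 𝕜 x y) : sipX y x = 0 := by
  obtain ⟨φ, hφ, hφy⟩ := bj_supp hx h
  rw [hX.2 y x φ hφ, hφy, mul_zero]

/-- For a unit vector, the compatible SIP satisfies `[x, x] = 1`. -/
lemma sip_self_one {𝕜 : Type*} [RCLike 𝕜] {X : Type*} [NormedAddCommGroup X] [NormedSpace 𝕜 X]
    {sipX : X → X → 𝕜} (hX : IsCompatSIP 𝕜 sipX) {x : X} (hx : ‖x‖ = 1) :
    sipX x x = 1 := by
  have hx0 : x ≠ 0 := by intro h; rw [h, norm_zero] at hx; norm_num at hx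
  obtain ⟨φ, h1, h2⟩ := exists_dual_vector 𝕜 x (norm_ne_zero_iff.2 hx0)
  rw [hX.2 x x φ ⟨h1, h2⟩, h2, hx]
  norm_num

theorem stmt9 {𝕜 : Type*} [RCLike 𝕜] {X Y : Type*} [NormedAddCommGroup X] [NormedSpace 𝕜 X]
    [NormedAddCommGroup Y] [NormedSpace 𝕜 Y]
    (hsmX : NormSmooth 𝕜 X) (hsmY : NormSmooth 𝕜 Y)
    (sipX : X → X → 𝕜) (hX : IsCompatSIP 𝕜 sipX)
    (sipY : Y → Y → 𝕜) (hY : IsCompatSIP 𝕜 sipY)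
    (f : X → Y) (hf : ∀ x y : X, ‖sipY (f x) (f y)‖ = ‖sipX x y‖)
    (x y z : X) (hx : ‖x‖ = 1) (hy : ‖y‖ = 1) (hz : ‖z‖ = 1)
    (hxy : BJOrth 𝕜 x y) (hxz : BJOrth 𝕜 x z) (hyz : BJOrth 𝕜 y z) :
    LinearIndependent 𝕜 ![f x, f y, f z] := by
  -- nonvanishing of images
  have hfne : ∀ w : X, ‖w‖ = 1 → f w ≠ 0 := by
    intro w hw h0
    have h1 : ‖sipY (f w) (f w)‖ = ‖sipX w w‖ := hf w w
    rw [sip_self_one hX hw, h0, hY.1 0] at h1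
    norm_num at h1
  have hfx : f x ≠ 0 := hfne x hx
  have hfy : f y ≠ 0 := hfne y hy
  have hfz : f z ≠ 0 := hfne z hz
  -- support functionals at f x and f y
  obtain ⟨ψx, hψx1, hψx2⟩ := exists_dual_vector 𝕜 (f x) (norm_ne_zero_iff.2 hfx)
  obtain ⟨ψy, hψy1, hψy2⟩ := exists_dual_vector 𝕜 (f y) (norm_ne_zero_iff.2 hfy)
  have hfxn : (‖f x‖ : 𝕜) ≠ 0 := by
    simp only [ne_eq, RCLike.ofReal_eq_zero, norm_eq_zero]; exact hfx
  have hfyn : (‖f y‖ : 𝕜) ≠ 0 := by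
    simp only [ne_eq, RCLike.ofReal_eq_zero, norm_eq_zero]; exact hfy
  -- orthogonality relations transported through f
  have key : ∀ (u v : X) (ψ : Y →L[𝕜] 𝕜), ‖v‖ = 1 → BJOrth 𝕜 v u →
      SuppFunc 𝕜 (f v) ψ → (‖f v‖ : 𝕜) ≠ 0 → ψ (f u) = 0 := by
    intro u v ψ hv hbj hψ hn
    have h1 : ‖sipY (f u) (f v)‖ = ‖sipX u v‖ := hf u v
    rw [bj_sip_zero hX hv hbj, norm_zero, norm_eq_zero] at h1
    rw [hY.2 (f u) (f v) ψ hψ] at h1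
    exact (mul_eq_zero.1 h1).resolve_left hn
  have hxy' : ψx (f y) = 0 := key y x ψx hx hxy ⟨hψx1, hψx2⟩ hfxn
  have hxz' : ψx (f z) = 0 := key z x ψx hx hxz ⟨hψx1, hψx2⟩ hfxn
  have hyz' : ψy (f z) = 0 := key z y ψy hy hyz ⟨hψy1, hψy2⟩ hfyn
  rw [Fintype.linearIndependent_iff]
  intro g hg
  simp only [Fin.sum_univ_three, Matrix.cons_val_zero, Matrix.cons_val_one, Matrix.head_cons,
    Matrix.cons_val_two, Matrix.tail_cons] at hg
  have e0 : g 0 = 0 := by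
    have := congrArg ψx hg
    simp only [map_add, map_smul, map_zero, smul_eq_mul, hψx2, hxy', hxz',
      mul_zero, add_zero] at this
    exact (mul_eq_zero.1 this).resolve_right hfxn
  have e1 : g 1 = 0 := by
    have := congrArg ψy hg
    simp only [map_add, map_smul, map_zero, smul_eq_mul, hψy2, hyz', e0, zero_mul,
      mul_zero, add_zero, zero_add] at this
    exact (mul_eq_zero.1 this).resolve_right hfyn
  have e2 : g 2 = 0 := by
    rw [e0, e1, zero_smul, zero_smul, zero_add, zero_add] at hg
    exact (smul_eq_zero.1 hg).resolve_right hfz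
  intro i
  fin_cases i <;> assumption
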